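/- Let (G,g) be a connected stable weighted graph with n marked legs p_1,…,p_n, let a = (a_1,…,a_n) ∈ ℤ^n with a_i ≠ 0 for all i and a_1 + ⋯ + a_n = 0, and fix an orientation e ↦ h_e of the edges of G. Then only finitely many harmonic slope assignments s on G with s(p_i) = −a_i for all i are realizable by a strictly positive edge-length function, i.e. admit some ℓ ∈ ℝ_{>0}^{E(G)} with ⟨s,γ⟩_ℓ = 0 for every 1-cycle γ ∈ ker ∂. Consequently, the set { ℓ ∈ ℝ_{>0}^{E(G)} : there exists a harmonic slope assignment s with s(p_i) = −a_i for all i and ⟨s,γ⟩_ℓ = 0 for all γ ∈ ker ∂ } is the intersection of ℝ_{>0}^{E(G)} with a finite union of linear subspaces of ℝ^{E(G)}, each cut out by finitely many homogeneous linear equations with integer coefficients. -/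
import Mathlib


namespace TropDR

open Finset

/-- `Finset.filter` with classical decidability. -/
noncomputable def cfilter {α : Type*} (p : α → Prop) (s : Finset α) : Finset α :=
  @Finset.filter α p (Classical.decPred p) s

/-- A graph with legs: a finite set `X` together with an idempotent root map `rt`
and an involution `inv` fixing every root vertex. -/
structure PGraph where
  X : Type
  [fintypeX : Fintype X]
  [decEqX : DecidableEq X]
  rt : X → X
  inv : X → X
  rt_idem : ∀ x, rt (rt x) = rt x
  inv_invol : ∀ x, inv (inv x) = x
  inv_fix_rt : ∀ x, inv (rt x) = rt x

attribute [instance] PGraph.fintypeX PGraph.decEqX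

namespace PGraph

variable (G : PGraph)

/-- Vertices are the fixed points (= the image) of the root map. -/
def IsVertex (x : G.X) : Prop := G.rt x = x

/-- Half-edges are the non-vertices. -/
def IsHalf (x : G.X) : Prop := G.rt x ≠ x

/-- Legs are the `inv`-fixed half-edges. -/
def IsLeg (x : G.X) : Prop := G.IsHalf x ∧ G.inv x = x

/-- Halves of genuine edges: half-edges moved by the involution. -/
def IsEdgeHalf (x : G.X) : Prop := G.IsHalf x ∧ G.inv x ≠ x

noncomputable def vertexSet : Finset G.X := cfilter (fun x => G.IsVertex x) Finset.univ

noncomputable def legSet : Finset G.X := cfilter (fun x => G.IsLeg x) Finset.univ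

noncomputable def edgeHalfSet : Finset G.X := cfilter (fun x => G.IsEdgeHalf x) Finset.univ

/-- Tangent directions at a vertex `v`: half-edges rooted at `v`. -/
noncomputable def tangents (v : G.X) : Finset G.X :=
  cfilter (fun h => G.IsHalf h ∧ G.rt h = v) Finset.univ

noncomputable def valence (v : G.X) : ℕ := (G.tangents v).card

/-- The number of edges: half the number of edge half-edges. -/
noncomputable def numEdges : ℕ := G.edgeHalfSet.card / 2

noncomputable def numLegs : ℕ := G.legSet.card

noncomputable def numVertices : ℕ := G.vertexSet.card

/-- Connectedness: the equivalence relation generated by `x ∼ rt x` and `x ∼ inv x`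
has a single class (and `X` is nonempty). -/
def Connected : Prop :=
  Nonempty G.X ∧ ∀ x y : G.X, Relation.EqvGen (fun a b => G.rt a = b ∨ G.inv a = b) x y

/-- A subgraph: a subset of `X` closed under the root map and the involution. -/
def IsSubgraph (F : Finset G.X) : Prop :=
  (∀ x ∈ F, G.rt x ∈ F) ∧ (∀ x ∈ F, G.inv x ∈ F)

/-- Valency of `v` inside a subgraph `F`. -/
noncomputable def valIn (F : Finset G.X) (v : G.X) : ℕ := (G.tangents v ∩ F).card

end PGraph

/-- A morphism of graphs: commutes with the root maps and involutions,
and maps no edge into a leg. -/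
structure GraphHom (G' G : PGraph) where
  toFun : G'.X → G.X
  map_rt : ∀ x, toFun (G'.rt x) = G.rt (toFun x)
  map_inv : ∀ x, toFun (G'.inv x) = G.inv (toFun x)
  edge_not_leg : ∀ h, G'.IsEdgeHalf h → ¬ G.IsLeg (toFun h)

/-- A harmonic morphism of graphs: a graph morphism together with a degree function. -/
structure HarmonicHom (G' G : PGraph) extends GraphHom G' G where
  deg : G'.X → ℕ
  deg_edge : ∀ h, G'.IsEdgeHalf h → deg (G'.inv h) = deg h
  deg_zero_iff : ∀ h, G'.IsHalf h → (deg h = 0 ↔ G.IsVertex (toFun h))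
  harmonic : ∀ v', G'.IsVertex v' → ∀ h, G.IsHalf h → G.rt h = toFun v' →
    deg v' = ∑ h' ∈ cfilter (fun h' => toFun h' = h) (G'.tangents v'), deg h'

namespace HarmonicHom

variable {G' G : PGraph} (φ : HarmonicHom G' G)

/-- A harmonic morphism is finite if it has positive degree on every half-edge. -/
def Finite : Prop := ∀ h, G'.IsHalf h → 0 < φ.deg h

/-- The sum of the degrees over the vertex fiber of `v`. -/
noncomputable def vertexFiberDeg (v : G.X) : ℕ :=
  ∑ v' ∈ cfilter (fun v' => φ.toFun v' = v) G'.vertexSet, φ.deg v'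

end HarmonicHom

/-- A weighted graph: a graph together with a genus function on (all elements;
only the values at vertices are relevant). -/
structure WGraph extends PGraph where
  gw : X → ℕ

namespace WGraph

variable (G : WGraph)

/-- The genus of a (connected) weighted graph. -/
noncomputable def genus : ℤ :=
  (G.toPGraph.numEdges : ℤ) - (G.toPGraph.numVertices : ℤ) + 1 +
    ∑ v ∈ G.toPGraph.vertexSet, (G.gw v : ℤ)

/-- The Euler characteristic of a vertex. -/
noncomputable def chiV (v : G.X) : ℤ :=
  2 - 2 * (G.gw v : ℤ) - (G.toPGraph.valence v : ℤ)

/-- The Euler characteristic of a (connected) weighted graph. -/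
noncomputable def chi : ℤ := 2 - 2 * G.genus - (G.toPGraph.numLegs : ℤ)

end WGraph

/-- The ramification degree of a (finite) harmonic morphism of weighted graphs at `v'`. -/
noncomputable def ram {G' G : WGraph} (φ : HarmonicHom G'.toPGraph G.toPGraph) (v' : G'.X) : ℤ :=
  (φ.deg v' : ℤ) * G.chiV (φ.toFun v') - G'.chiV v'

def Unramified {G' G : WGraph} (φ : HarmonicHom G'.toPGraph G.toPGraph) : Prop :=
  ∀ v', G'.toPGraph.IsVertex v' → ram φ v' = 0

def Effective {G' G : WGraph} (φ : HarmonicHom G'.toPGraph G.toPGraph) : Prop :=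
  ∀ v', G'.toPGraph.IsVertex v' → 0 ≤ ram φ v'

/-- A slope assignment on a graph `G`: an integer on each half-edge (extended by zero on
the vertices), antisymmetric on the two halves of every edge. -/
structure SlopeAssignment (G : PGraph) where
  s : G.X → ℤ
  vertex_zero : ∀ x, G.IsVertex x → s x = 0
  edge_antisym : ∀ h, G.IsEdgeHalf h → s (G.inv h) = - s h

/-- A slope assignment is harmonic if the outgoing slopes at every vertex sum to zero. -/
def SlopeAssignment.Harmonic {G : PGraph} (σ : SlopeAssignment G) : Prop :=
  ∀ v, G.IsVertex v → ∑ h ∈ G.tangents v, σ.s h = 0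

/-- `γ` (a simplicial 1-chain, given by its coefficients on the chosen orientation `O` of
the edges) is a 1-cycle: its boundary `Σ_e γ_e·(r(ι h_e) − r(h_e))` vanishes. -/
def IsOneCycle (G : WGraph) (O : Finset G.X) (γ : {h : G.X // h ∈ O} → ℤ) : Prop :=
  ∀ v : G.X, G.toPGraph.IsVertex v →
    ∑ h : {h : G.X // h ∈ O},
      γ h * ((if G.rt (G.inv h.1) = v then (1 : ℤ) else 0) -
        (if G.rt h.1 = v then (1 : ℤ) else 0)) = 0

/-- The edge-length pairing `⟨s,γ⟩_ℓ = Σ_e s(h_e)·γ_e·ℓ(e)`. -/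
noncomputable def lpairing (G : WGraph) (O : Finset G.X) (σ : SlopeAssignment G.toPGraph)
    (γ : {h : G.X // h ∈ O} → ℤ) (ℓ : {h : G.X // h ∈ O} → ℝ) : ℝ :=
  ∑ h : {h : G.X // h ∈ O}, (σ.s h.1 : ℝ) * (γ h : ℝ) * ℓ h


section Aux

lemma mem_cfilter {α : Type*} {p : α → Prop} {s : Finset α} {x : α} :
    x ∈ cfilter p s ↔ x ∈ s ∧ p x := by
  classical
  unfold cfilter
  rw [Finset.filter_congr_decidable]
  exact Finset.mem_filter

variable (G : WGraph) (O : Finset G.X)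

/-- The boundary of a 1-chain, evaluated at `v`. -/
noncomputable def bnd (γ : {h : G.X // h ∈ O} → ℤ) (v : G.X) : ℤ :=
  ∑ h : {h : G.X // h ∈ O},
    γ h * ((if G.rt (G.inv h.1) = v then (1 : ℤ) else 0) -
      (if G.rt h.1 = v then (1 : ℤ) else 0))

lemma bnd_zero (v : G.X) : bnd G O 0 v = 0 := by simp [bnd]

lemma bnd_add (γ₁ γ₂ : {h : G.X // h ∈ O} → ℤ) (v : G.X) :
    bnd G O (γ₁ + γ₂) v = bnd G O γ₁ v + bnd G O γ₂ v := by
  simp [bnd, add_mul, Finset.sum_add_distrib]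

lemma bnd_neg (γ : {h : G.X // h ∈ O} → ℤ) (v : G.X) :
    bnd G O (-γ) v = - bnd G O γ v := by
  simp [bnd]

lemma bnd_sub (γ₁ γ₂ : {h : G.X // h ∈ O} → ℤ) (v : G.X) :
    bnd G O (γ₁ - γ₂) v = bnd G O γ₁ v - bnd G O γ₂ v := by
  simp [bnd, sub_mul, Finset.sum_sub_distrib]

lemma bnd_single (e : G.X) (he : e ∈ O) (v : G.X) :
    bnd G O (fun h => if h = ⟨e, he⟩ then 1 else 0) v =
      (if G.rt (G.inv e) = v then 1 else 0) - (if G.rt e = v then 1 else 0) := by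
  unfold bnd
  simp only [ite_mul, one_mul, zero_mul]
  rw [Fintype.sum_ite_eq']

lemma edgehalf_inv {x : G.X} (hx : G.toPGraph.IsEdgeHalf x) :
    G.toPGraph.IsEdgeHalf (G.inv x) := by
  constructor
  · intro hv
    have h1 : G.inv (G.rt (G.inv x)) = G.rt (G.inv x) := G.inv_fix_rt _
    rw [hv] at h1
    have h2 : G.inv (G.inv x) = x := G.inv_invol x
    rw [h1] at h2
    exact hx.2 h2
  · intro hfix
    rw [G.inv_invol] at hfix
    exact hx.2 hfix.symm

/-- From a connectivity chain between `x` and `y` one extracts a 1-chain whose boundary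
is `[rt y] - [rt x]`. -/
lemma exists_chain (hO2 : ∀ h, G.toPGraph.IsEdgeHalf h → (h ∈ O ↔ G.inv h ∉ O))
    (x y : G.X) (hxy : Relation.EqvGen (fun a b => G.rt a = b ∨ G.inv a = b) x y) :
    ∃ γ : {h : G.X // h ∈ O} → ℤ, ∀ v : G.X,
      bnd G O γ v = (if G.rt y = v then 1 else 0) - (if G.rt x = v then 1 else 0) := by
  induction hxy with
  | rel a b hab =>
    rcases hab with h1 | h2
    · refine ⟨0, fun v => ?_⟩
      have hb : G.rt b = G.rt a := by rw [← h1, G.rt_idem]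
      rw [bnd_zero, hb]
      ring
    · by_cases hfix : G.inv a = a
      · refine ⟨0, fun v => ?_⟩
        rw [bnd_zero, ← h2, hfix]
        ring
      · have hhalf : G.toPGraph.IsHalf a := by
          intro hv
          have := G.inv_fix_rt a
          rw [hv] at this
          exact hfix this
        have hedge : G.toPGraph.IsEdgeHalf a := ⟨hhalf, hfix⟩
        by_cases hmemO : a ∈ O
        · refine ⟨fun h => if h = ⟨a, hmemO⟩ then 1 else 0, fun v => ?_⟩
          rw [bnd_single, ← h2]
        · have hmem' : G.inv a ∈ O := by
            by_contra hc
            exact hmemO ((hO2 a hedge).2 hc)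
          refine ⟨-(fun h => if h = ⟨G.inv a, hmem'⟩ then 1 else 0), fun v => ?_⟩
          rw [bnd_neg, bnd_single, G.inv_invol, ← h2]
          ring
  | refl a => exact ⟨0, fun v => by rw [bnd_zero]; ring⟩
  | symm a b _ ih =>
    obtain ⟨γ, hγ⟩ := ih
    exact ⟨-γ, fun v => by rw [bnd_neg, hγ v]; ring⟩
  | trans a b c _ _ ih₁ ih₂ =>
    obtain ⟨γ₁, hγ₁⟩ := ih₁
    obtain ⟨γ₂, hγ₂⟩ := ih₂
    exact ⟨γ₁ + γ₂, fun v => by rw [bnd_add, hγ₁ v, hγ₂ v]; ring⟩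

/-- The length pairing as a `ℤ`-linear map in the chain variable. -/
noncomputable def lmap (σ : SlopeAssignment G.toPGraph) (ℓ : {h : G.X // h ∈ O} → ℝ) :
    ({h : G.X // h ∈ O} → ℤ) →ₗ[ℤ] ℝ where
  toFun γ := lpairing G O σ γ ℓ
  map_add' γ₁ γ₂ := by
    unfold lpairing
    rw [← Finset.sum_add_distrib]
    exact Finset.sum_congr rfl fun h _ => by simp only [Pi.add_apply]; push_cast; ring
  map_smul' z γ := by
    unfold lpairing
    simp only [RingHom.id_apply, Pi.smul_apply, smul_eq_mul, zsmul_eq_mul]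
    rw [Finset.mul_sum]
    exact Finset.sum_congr rfl fun h _ => by push_cast; ring

/-- Any harmonic slope assignment with prescribed leg slopes that is realizable by a
strictly positive edge length has all slopes bounded by `∑ |a i|`. -/
lemma slope_bound (hConn : G.toPGraph.Connected)
    (n : ℕ) (p : Fin n → G.X) (hleg : ∀ i, G.toPGraph.IsLeg (p i))
    (hinj : Function.Injective p) (hsurj : ∀ q, G.toPGraph.IsLeg q → ∃ i, p i = q)
    (a : Fin n → ℤ)
    (hO2 : ∀ h, G.toPGraph.IsEdgeHalf h → (h ∈ O ↔ G.inv h ∉ O))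
    (σ : SlopeAssignment G.toPGraph) (hharm : σ.Harmonic)
    (hbdry : ∀ i, σ.s (p i) = - a i)
    (ℓ : {h : G.X // h ∈ O} → ℝ) (hpos : ∀ h, 0 < ℓ h)
    (hreal : ∀ γ : {h : G.X // h ∈ O} → ℤ, IsOneCycle G O γ → lpairing G O σ γ ℓ = 0) :
    ∀ x, |σ.s x| ≤ ∑ i, |a i| := by
  classical
  set B : ℤ := ∑ i, |a i| with hB
  have hB0 : 0 ≤ B := Finset.sum_nonneg fun i _ => abs_nonneg _
  obtain ⟨x0⟩ := hConn.1
  have hch : ∀ x : G.X, ∃ γ : {h : G.X // h ∈ O} → ℤ, ∀ v : G.X,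
      bnd G O γ v = (if G.rt x = v then 1 else 0) - (if G.rt x0 = v then 1 else 0) :=
    fun x => exists_chain G O hO2 x0 x (hConn.2 x0 x)
  choose ch hch using hch
  set L : ({h : G.X // h ∈ O} → ℤ) →ₗ[ℤ] ℝ := lmap G O σ ℓ with hLdef
  have hLcyc : ∀ γ, IsOneCycle G O γ → L γ = 0 := fun γ hγ => hreal γ hγ
  set f : G.X → ℝ := fun x => L (ch x) with hf
  have fconst : ∀ x y : G.X, G.rt x = G.rt y → f x = f y := by
    intro x y hxy
    have hc : IsOneCycle G O (ch y - ch x) := by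
      intro v hv
      show bnd G O (ch y - ch x) v = 0
      rw [bnd_sub, hch, hch, hxy]
      ring
    have h0 := hLcyc _ hc
    rw [map_sub] at h0
    simp only [hf]
    linarith
  have frt : ∀ x : G.X, f (G.rt x) = f x :=
    fun x => fconst _ _ (by rw [G.rt_idem])
  have fstep : ∀ h : G.X, G.toPGraph.IsEdgeHalf h → ∃ Lh : ℝ, 0 < Lh ∧
      f (G.rt (G.inv h)) - f (G.rt h) = (σ.s h : ℝ) * Lh := by
    have main : ∀ (h : G.X) (hmem : h ∈ O),
        f (G.inv h) - f h = (σ.s h : ℝ) * ℓ ⟨h, hmem⟩ := by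
      intro h hmem
      set δ : {h : G.X // h ∈ O} → ℤ := fun h' => if h' = ⟨h, hmem⟩ then 1 else 0 with hδdef
      have hcyc : IsOneCycle G O (ch (G.inv h) - ch h - δ) := by
        intro v hv
        show bnd G O (ch (G.inv h) - ch h - δ) v = 0
        rw [bnd_sub, bnd_sub, hch, hch, hδdef, bnd_single]
        ring
      have h0 := hLcyc _ hcyc
      rw [map_sub, map_sub] at h0
      have hδval : L δ = (σ.s h : ℝ) * ℓ ⟨h, hmem⟩ := by
        show lpairing G O σ δ ℓ = (σ.s h : ℝ) * ℓ ⟨h, hmem⟩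
        unfold lpairing
        have : ∀ h' : {h : G.X // h ∈ O},
            (σ.s h'.1 : ℝ) * (δ h' : ℝ) * ℓ h' =
              if h' = ⟨h, hmem⟩ then (σ.s h'.1 : ℝ) * ℓ h' else 0 := by
          intro h'
          by_cases hx : h' = ⟨h, hmem⟩ <;> simp [hδdef, hx]
        rw [Finset.sum_congr rfl fun h' _ => this h', Fintype.sum_ite_eq']
      simp only [hf]
      rw [hδval] at h0
      linarith
    intro h hh
    by_cases hmem : h ∈ O
    · refine ⟨ℓ ⟨h, hmem⟩, hpos _, ?_⟩
      rw [frt, frt]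
      exact main h hmem
    · have hmem' : G.inv h ∈ O := by
        by_contra hc
        exact hmem ((hO2 h hh).2 hc)
      refine ⟨ℓ ⟨G.inv h, hmem'⟩, hpos _, ?_⟩
      have := main (G.inv h) hmem'
      rw [G.inv_invol, σ.edge_antisym h hh] at this
      rw [frt, frt]
      push_cast at this ⊢
      linarith
  -- the key cut bound
  have key : ∀ h : G.X, G.toPGraph.IsEdgeHalf h → σ.s h ≤ B := by
    intro h0 hh0
    by_cases hsgn : σ.s h0 ≤ 0
    · exact le_trans hsgn hB0
    push_neg at hsgn
    obtain ⟨L0, hL0, hstep0⟩ := fstep h0 hh0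
    have hcast : (0 : ℝ) < (σ.s h0 : ℝ) := by exact_mod_cast hsgn
    have hsl : (0 : ℝ) < (σ.s h0 : ℝ) * L0 := mul_pos hcast hL0
    set t : ℝ := f (G.rt h0) + (σ.s h0 : ℝ) * L0 / 2 with ht
    have ht1 : f (G.rt h0) < t := by rw [ht]; linarith
    have ht2 : t < f (G.rt (G.inv h0)) := by rw [ht]; linarith
    have hinv0 : G.toPGraph.IsEdgeHalf (G.inv h0) := edgehalf_inv G hh0
    set Afin : Finset G.X := cfilter (fun v => G.toPGraph.IsVertex v ∧ t < f v) Finset.univ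
      with hAdef
    set Hfin : Finset G.X := cfilter (fun h => G.toPGraph.IsHalf h ∧ t < f (G.rt h)) Finset.univ
      with hHdef
    have memA : ∀ v : G.X, v ∈ Afin ↔ (G.toPGraph.IsVertex v ∧ t < f v) := by
      intro v
      rw [hAdef, mem_cfilter]
      simp
    have memH : ∀ h : G.X, h ∈ Hfin ↔ (G.toPGraph.IsHalf h ∧ t < f (G.rt h)) := by
      intro h
      rw [hHdef, mem_cfilter]
      simp
    have memT : ∀ v h : G.X, h ∈ G.toPGraph.tangents v ↔ (G.toPGraph.IsHalf h ∧ G.rt h = v) := by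
      intro v h
      rw [PGraph.tangents, mem_cfilter]
      simp
    have hmaps : ∀ h ∈ Hfin, G.rt h ∈ Afin := by
      intro h hh
      have hh' := (memH h).1 hh
      rw [memA]
      exact ⟨G.rt_idem h, hh'.2⟩
    have hsum0 : ∑ h ∈ Hfin, σ.s h = 0 := by
      rw [← Finset.sum_fiberwise_of_maps_to hmaps σ.s]
      refine Finset.sum_eq_zero fun v hv => ?_
      have hv' := (memA v).1 hv
      have hfe : Finset.filter (fun h => G.rt h = v) Hfin = G.toPGraph.tangents v := by
        ext h
        rw [Finset.mem_filter, memT, memH]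
        constructor
        · rintro ⟨⟨hhalf, -⟩, hrt⟩
          exact ⟨hhalf, hrt⟩
        · rintro ⟨hhalf, hrt⟩
          refine ⟨⟨hhalf, ?_⟩, hrt⟩
          rw [hrt]
          exact hv'.2
      rw [hfe]
      exact hharm v hv'.1
    set Sleg : Finset G.X := Finset.filter (fun h => G.inv h = h) Hfin with hSleg
    set Srest : Finset G.X := Finset.filter (fun h => ¬ G.inv h = h) Hfin with hSrest
    have hsplit1 : ∑ h ∈ Sleg, σ.s h + ∑ h ∈ Srest, σ.s h = ∑ h ∈ Hfin, σ.s h :=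
      Finset.sum_filter_add_sum_filter_not Hfin _ σ.s
    set Sint : Finset G.X := Finset.filter (fun h => t < f (G.rt (G.inv h))) Srest with hSint
    set Scross : Finset G.X := Finset.filter (fun h => ¬ t < f (G.rt (G.inv h))) Srest
      with hScross
    have hsplit2 : ∑ h ∈ Sint, σ.s h + ∑ h ∈ Scross, σ.s h = ∑ h ∈ Srest, σ.s h :=
      Finset.sum_filter_add_sum_filter_not Srest _ σ.s
    have hmemSrest : ∀ h ∈ Srest, G.toPGraph.IsEdgeHalf h ∧ t < f (G.rt h) := by
      intro h hh
      rw [hSrest, Finset.mem_filter, memH] at hh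
      exact ⟨⟨hh.1.1, hh.2⟩, hh.1.2⟩
    -- the interior sum vanishes
    have hint0 : ∑ h ∈ Sint, σ.s h = 0 := by
      refine Finset.sum_involution (fun h _ => G.inv h) ?_ ?_ ?_ ?_
      · intro h hh
        rw [hSint, Finset.mem_filter] at hh
        rw [σ.edge_antisym h (hmemSrest h hh.1).1]
        ring
      · intro h hh _
        rw [hSint, Finset.mem_filter] at hh
        exact (hmemSrest h hh.1).1.2
      · intro h hh
        rw [hSint, Finset.mem_filter] at hh
        obtain ⟨hhr, hhf⟩ := hh
        obtain ⟨hedge, hrt⟩ := hmemSrest h hhr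
        have hedge' : G.toPGraph.IsEdgeHalf (G.inv h) := edgehalf_inv G hedge
        show G.inv h ∈ Sint
        rw [hSint, Finset.mem_filter, hSrest, Finset.mem_filter, memH]
        refine ⟨⟨⟨hedge'.1, hhf⟩, hedge'.2⟩, ?_⟩
        rw [G.inv_invol]
        exact hrt
      · intro h _
        exact G.inv_invol h
    -- legs sum
    set I : Finset (Fin n) := Finset.filter (fun i => t < f (G.rt (p i))) Finset.univ with hI
    have hlegsum : ∑ i ∈ I, (- a i) = ∑ h ∈ Sleg, σ.s h := by
      refine Finset.sum_bij (fun i _ => p i) ?_ ?_ ?_ ?_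
      · intro i hi
        rw [hI, Finset.mem_filter] at hi
        rw [hSleg, Finset.mem_filter, memH]
        exact ⟨⟨(hleg i).1, hi.2⟩, (hleg i).2⟩
      · intro i _ j _ hij
        exact hinj hij
      · intro h hh
        rw [hSleg, Finset.mem_filter, memH] at hh
        obtain ⟨i, hi⟩ := hsurj h ⟨hh.1.1, hh.2⟩
        refine ⟨i, ?_, hi⟩
        rw [hI, Finset.mem_filter]
        exact ⟨Finset.mem_univ _, by rw [hi]; exact hh.1.2⟩
      · intro i _
        rw [hbdry i]
    -- crossing halves have negative slope
    have hcross_nonpos : ∀ h ∈ Scross, σ.s h ≤ 0 := by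
      intro h hh
      rw [hScross, Finset.mem_filter] at hh
      obtain ⟨hedge, hrt⟩ := hmemSrest h hh.1
      obtain ⟨Lh, hLh, hstep⟩ := fstep h hedge
      have hle : f (G.rt (G.inv h)) ≤ t := not_lt.1 hh.2
      by_contra hcon
      push_neg at hcon
      have : (0 : ℝ) < (σ.s h : ℝ) := by exact_mod_cast hcon
      nlinarith
    have hmem_cross : G.inv h0 ∈ Scross := by
      rw [hScross, Finset.mem_filter, hSrest, Finset.mem_filter, memH]
      refine ⟨⟨⟨hinv0.1, ht2⟩, hinv0.2⟩, ?_⟩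
      rw [G.inv_invol]
      exact not_lt.2 ht1.le
    have hcross_le : ∑ h ∈ Scross, σ.s h ≤ σ.s (G.inv h0) := by
      rw [← Finset.add_sum_erase _ _ hmem_cross]
      have : ∑ h ∈ Scross.erase (G.inv h0), σ.s h ≤ 0 :=
        Finset.sum_nonpos fun h hh => hcross_nonpos h (Finset.mem_of_mem_erase hh)
      linarith
    have hanti : σ.s (G.inv h0) = - σ.s h0 := σ.edge_antisym h0 hh0
    have hIB : ∑ i ∈ I, (- a i) ≤ B := by
      calc ∑ i ∈ I, (- a i) ≤ ∑ i ∈ I, |a i| :=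
            Finset.sum_le_sum fun i _ => neg_le_abs _
        _ ≤ ∑ i, |a i| :=
            Finset.sum_le_sum_of_subset_of_nonneg (Finset.filter_subset _ _)
              (fun i _ _ => abs_nonneg _)
        _ = B := hB.symm
    linarith
  intro x
  by_cases hv : G.toPGraph.IsVertex x
  · rw [σ.vertex_zero x hv]
    simpa using hB0
  · by_cases hfix : G.inv x = x
    · obtain ⟨i, hi⟩ := hsurj x ⟨hv, hfix⟩
      rw [← hi, hbdry i, abs_neg]
      exact Finset.single_le_sum (f := fun i => |a i|) (fun i _ => abs_nonneg _)
        (Finset.mem_univ i)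
    · have hx : G.toPGraph.IsEdgeHalf x := ⟨hv, hfix⟩
      rw [abs_le]
      constructor
      · have h1 := key (G.inv x) (edgehalf_inv G hx)
        rw [σ.edge_antisym x hx] at h1
        linarith
      · exact key x hx

end Aux

/-- Let `(G,g)` be a connected stable weighted graph with `n` marked legs
`p 0, …, p (n-1)`, let `a : Fin n → ℤ` consist of nonzero integers summing to zero, and fix
an orientation `O` of the edges of `G` (a choice of one half-edge from every edge).  Then:
(1) only finitely many harmonic slope assignments `σ` on `G` with `σ.s (p i) = −a i` are
realizable by a strictly positive edge-length function (one orthogonal to all 1-cycles in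
the length pairing); consequently (2) the set of strictly positive edge-length functions
realizing some such slope assignment is the intersection of the positive orthant with a
finite union of linear subspaces of `ℝ^{E(G)}`, each cut out by finitely many homogeneous
`ℤ`-linear equations. -/
theorem principal_divisor_locus_is_semilinear
    (G : WGraph) (hConn : G.toPGraph.Connected)
    (hStable : ∀ v, G.toPGraph.IsVertex v → G.chiV v < 0)
    (n : ℕ) (p : Fin n → G.X) (hleg : ∀ i, G.toPGraph.IsLeg (p i))
    (hinj : Function.Injective p) (hsurj : ∀ q, G.toPGraph.IsLeg q → ∃ i, p i = q)
    (a : Fin n → ℤ) (ha : ∀ i, a i ≠ 0) (hsum : ∑ i, a i = 0)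
    (O : Finset G.X) (hO1 : ∀ h ∈ O, G.toPGraph.IsEdgeHalf h)
    (hO2 : ∀ h, G.toPGraph.IsEdgeHalf h → (h ∈ O ↔ G.inv h ∉ O)) :
    {σ : SlopeAssignment G.toPGraph |
        σ.Harmonic ∧ (∀ i, σ.s (p i) = - a i) ∧
        ∃ ℓ : {h : G.X // h ∈ O} → ℝ, (∀ h, 0 < ℓ h) ∧
          ∀ γ : {h : G.X // h ∈ O} → ℤ, IsOneCycle G O γ → lpairing G O σ γ ℓ = 0}.Finite ∧
    ∃ (k m : ℕ) (c : Fin k → Fin m → {h : G.X // h ∈ O} → ℤ),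
      {ℓ : {h : G.X // h ∈ O} → ℝ |
          (∀ h, 0 < ℓ h) ∧
          ∃ σ : SlopeAssignment G.toPGraph, σ.Harmonic ∧ (∀ i, σ.s (p i) = - a i) ∧
            ∀ γ : {h : G.X // h ∈ O} → ℤ, IsOneCycle G O γ → lpairing G O σ γ ℓ = 0} =
        {ℓ : {h : G.X // h ∈ O} → ℝ | ∀ h, 0 < ℓ h} ∩
          ⋃ j : Fin k, {ℓ : {h : G.X // h ∈ O} → ℝ |
            ∀ i : Fin m, ∑ h : {h : G.X // h ∈ O}, (c j i h : ℝ) * ℓ h = 0} := by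
  classical
  set B : ℤ := ∑ i, |a i| with hB
  set S : Set (SlopeAssignment G.toPGraph) :=
    {σ : SlopeAssignment G.toPGraph |
        σ.Harmonic ∧ (∀ i, σ.s (p i) = - a i) ∧
        ∃ ℓ : {h : G.X // h ∈ O} → ℝ, (∀ h, 0 < ℓ h) ∧
          ∀ γ : {h : G.X // h ∈ O} → ℤ, IsOneCycle G O γ → lpairing G O σ γ ℓ = 0} with hS
  have hfin : S.Finite := by
    refine Set.Finite.of_finite_image (f := fun σ => σ.s) ?_ ?_
    · refine Set.Finite.subset
        (Set.Finite.pi (t := fun _ : G.X => (↑(Finset.Icc (-B) B) : Set ℤ))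
          fun _ => Finset.finite_toSet _) ?_
      rintro g ⟨σ, hσ, rfl⟩
      intro x _
      obtain ⟨hharm, hbdry, ℓ, hpos, hreal⟩ := hσ
      have hb := slope_bound G O hConn n p hleg hinj hsurj a hO2 σ hharm hbdry ℓ hpos hreal x
      rw [← hB] at hb
      simp only [Finset.coe_Icc, Set.mem_Icc]
      exact abs_le.1 hb
    · rintro σ₁ - σ₂ - heq
      cases σ₁
      cases σ₂
      simpa using heq
  -- the cycle submodule and a finite generating set
  set C : Submodule ℤ ({h : G.X // h ∈ O} → ℤ) :=
    { carrier := {γ | IsOneCycle G O γ}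
      add_mem' := by
        intro γ₁ γ₂ h₁ h₂ v hv
        have e₁ := h₁ v hv
        have e₂ := h₂ v hv
        simp only [Pi.add_apply, add_mul]
        rw [Finset.sum_add_distrib, e₁, e₂, add_zero]
      zero_mem' := by
        intro v hv
        simp
      smul_mem' := by
        intro z γ hγ v hv
        have e := hγ v hv
        simp only [Pi.smul_apply, smul_eq_mul, mul_assoc]
        rw [← Finset.mul_sum, e, mul_zero] } with hC
  have hCmem : ∀ γ, γ ∈ C ↔ IsOneCycle G O γ := fun γ => Iff.rfl
  obtain ⟨T, hT⟩ := IsNoetherian.noetherian C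
  refine ⟨hfin, hfin.toFinset.card, T.card,
    fun j i h =>
      ((hfin.toFinset.equivFin.symm j : hfin.toFinset) : SlopeAssignment G.toPGraph).s h.1 *
        ((T.equivFin.symm i : T) : {h : G.X // h ∈ O} → ℤ) h, ?_⟩
  set σj : Fin hfin.toFinset.card → SlopeAssignment G.toPGraph :=
    fun j => ((hfin.toFinset.equivFin.symm j : hfin.toFinset) : SlopeAssignment G.toPGraph)
    with hσj
  set gi : Fin T.card → ({h : G.X // h ∈ O} → ℤ) :=
    fun i => ((T.equivFin.symm i : T) : {h : G.X // h ∈ O} → ℤ) with hgi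
  have hgiC : ∀ i, IsOneCycle G O (gi i) := by
    intro i
    have hmem : gi i ∈ (↑T : Set ({h : G.X // h ∈ O} → ℤ)) := by
      exact (T.equivFin.symm i).2
    have : gi i ∈ C := by
      rw [← hT]
      exact Submodule.subset_span hmem
    exact this
  have hσjS : ∀ j, σj j ∈ S := fun j => (Set.Finite.mem_toFinset hfin).1 (Subtype.coe_prop _)
  ext ℓ
  simp only [Set.mem_setOf_eq, Set.mem_inter_iff, Set.mem_iUnion]
  constructor
  · rintro ⟨hpos, σ, hh, hb, hre⟩
    have hσS : σ ∈ hfin.toFinset := (Set.Finite.mem_toFinset hfin).2 ⟨hh, hb, ℓ, hpos, hre⟩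
    refine ⟨hpos, hfin.toFinset.equivFin ⟨σ, hσS⟩, fun i => ?_⟩
    simp only [Equiv.symm_apply_apply]
    show ∑ h : {h : G.X // h ∈ O}, ((σ.s h.1 * gi i h : ℤ) : ℝ) * ℓ h = 0
    rw [← hre (gi i) (hgiC i)]
    unfold lpairing
    refine Finset.sum_congr rfl fun h _ => ?_
    push_cast
    ring
  · rintro ⟨hpos, j, hj⟩
    obtain ⟨hharm, hbdry, -⟩ := hσjS j
    refine ⟨hpos, σj j, hharm, hbdry, ?_⟩
    intro γ hγ
    have hker : Submodule.span ℤ (↑T : Set ({h : G.X // h ∈ O} → ℤ)) ≤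
        LinearMap.ker (lmap G O (σj j) ℓ) := by
      rw [Submodule.span_le]
      intro g hg
      have hj' := hj (T.equivFin ⟨g, hg⟩)
      simp only [Equiv.symm_apply_apply] at hj'
      rw [SetLike.mem_coe, LinearMap.mem_ker]
      show lpairing G O (σj j) g ℓ = 0
      rw [← hj']
      unfold lpairing
      refine Finset.sum_congr rfl fun h _ => ?_
      push_cast
      ring
    have hγC : γ ∈ Submodule.span ℤ (↑T : Set ({h : G.X // h ∈ O} → ℤ)) := by
      rw [hT]
      exact hγ
    exact LinearMap.mem_ker.1 (hker hγC)

end TropDR
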